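/- Let G_n be weighted graphs with |V(G_n)| → ∞, and suppose that for a fixed q, a ∈ Δ_q, and all symmetric J ∈ ℝ^{q×q}, the microcanonical free energies F_{a,ε}(G_n,J) converge (in the sense that lim_{ε→0} liminf_n = lim_{ε→0} limsup_n =: F_a(J)). Then the microcanonical ground state energies converge with E_a(J) = lim_{λ→∞} F_a(λJ)/λ. -/

import Mathlib

open Filter

/-- A weighted graph: vertex set `Fin n` with nonnegative vertex weights of positive
total weight, and symmetric real edge weights. -/
structure WGraph where
  n : ℕ
  w : Fin n → ℝ
  wnn : ∀ u, 0 ≤ w u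
  wpos : 0 < ∑ u, w u
  b : Fin n → Fin n → ℝ
  bsymm : ∀ u v, b u v = b v u

/-- Total vertex weight `α_G`. -/
noncomputable def totW (G : WGraph) : ℝ := ∑ u, G.w u

/-- The density `‖G‖₁`. -/
noncomputable def norm1 (G : WGraph) : ℝ :=
  ∑ u, ∑ v, G.w u * G.w v * |G.b u v| / (totW G)^2

/-- Energy of a spin configuration `φ` (with the convention `1/0 = 0` when `‖G‖₁ = 0`). -/
noncomputable def energy {q : ℕ} (G : WGraph) (J : Matrix (Fin q) (Fin q) ℝ)
    (φ : Fin G.n → Fin q) : ℝ :=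
  -(1 / norm1 G) * ∑ u, ∑ v, (G.w u * G.w v / (totW G)^2) * G.b u v * J (φ v) (φ u)

/-- `φ ∈ Ω_{a,ε}(G)`: each color class has weight fraction within `ε` of `a`. -/
def inOmega {q : ℕ} (G : WGraph) (a : Fin q → ℝ) (ε : ℝ) (φ : Fin G.n → Fin q) : Prop :=
  ∀ i, |(∑ u, if φ u = i then G.w u else 0) / totW G - a i| ≤ ε

/-- Microcanonical ground state energy `E_{a,ε}(G,J)`. -/
noncomputable def microE {q : ℕ} (G : WGraph) (J : Matrix (Fin q) (Fin q) ℝ)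
    (a : Fin q → ℝ) (ε : ℝ) : ℝ :=
  sInf {e : ℝ | ∃ φ : Fin G.n → Fin q, inOmega G a ε φ ∧ e = energy G J φ}

/-- Microcanonical partition function `Z_{G,J}^{(a,ε)}`. -/
noncomputable def microZ {q : ℕ} (G : WGraph) (J : Matrix (Fin q) (Fin q) ℝ)
    (a : Fin q → ℝ) (ε : ℝ) : ℝ :=
  ∑ φ : Fin G.n → Fin q,
    Set.indicator {φ : Fin G.n → Fin q | inOmega G a ε φ}
      (fun φ => Real.exp (-(G.n : ℝ) * energy G J φ)) φ

/-- Microcanonical free energy `F_{a,ε}(G,J)`. -/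
noncomputable def microF {q : ℕ} (G : WGraph) (J : Matrix (Fin q) (Fin q) ℝ)
    (a : Fin q → ℝ) (ε : ℝ) : ℝ :=
  -(1 / (G.n : ℝ)) * Real.log (microZ G J a ε)

noncomputable def Jbnd {q : ℕ} (J : Matrix (Fin q) (Fin q) ℝ) : ℝ := ∑ i, ∑ j, |J i j|

lemma Jbnd_nonneg {q : ℕ} (J : Matrix (Fin q) (Fin q) ℝ) : 0 ≤ Jbnd J :=
  Finset.sum_nonneg fun _ _ => Finset.sum_nonneg fun _ _ => abs_nonneg _

lemma abs_le_Jbnd {q : ℕ} (J : Matrix (Fin q) (Fin q) ℝ) (i j : Fin q) : |J i j| ≤ Jbnd J := by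
  calc |J i j| ≤ ∑ j', |J i j'| :=
        Finset.single_le_sum (f := fun j' => |J i j'|) (fun _ _ => abs_nonneg _) (Finset.mem_univ j)
    _ ≤ Jbnd J :=
        Finset.single_le_sum (f := fun i' => ∑ j', |J i' j'|)
          (fun _ _ => Finset.sum_nonneg fun _ _ => abs_nonneg _) (Finset.mem_univ i)

lemma norm1_nonneg (G : WGraph) : 0 ≤ norm1 G :=
  Finset.sum_nonneg fun u _ => Finset.sum_nonneg fun v _ => by
    have := G.wnn u; have := G.wnn v
    positivity

lemma energy_abs_le {q : ℕ} (G : WGraph) (J : Matrix (Fin q) (Fin q) ℝ)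
    (φ : Fin G.n → Fin q) : |energy G J φ| ≤ Jbnd J := by
  have hα : (0:ℝ) < (totW G)^2 := by
    have := G.wpos; unfold totW; positivity
  have hS : |∑ u, ∑ v, (G.w u * G.w v / (totW G)^2) * G.b u v * J (φ v) (φ u)|
      ≤ norm1 G * Jbnd J := by
    calc |∑ u, ∑ v, (G.w u * G.w v / (totW G)^2) * G.b u v * J (φ v) (φ u)|
        ≤ ∑ u, |∑ v, (G.w u * G.w v / (totW G)^2) * G.b u v * J (φ v) (φ u)| :=
          Finset.abs_sum_le_sum_abs _ _
      _ ≤ ∑ u, ∑ v, |(G.w u * G.w v / (totW G)^2) * G.b u v * J (φ v) (φ u)| :=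
          Finset.sum_le_sum fun u _ => Finset.abs_sum_le_sum_abs _ _
      _ ≤ ∑ u, ∑ v, (G.w u * G.w v * |G.b u v| / (totW G)^2) * Jbnd J := by
          refine Finset.sum_le_sum fun u _ => Finset.sum_le_sum fun v _ => ?_
          rw [abs_mul, abs_mul]
          have h1 : |G.w u * G.w v / (totW G)^2| = G.w u * G.w v / (totW G)^2 := by
            rw [abs_of_nonneg]
            have := G.wnn u; have := G.wnn v
            positivity
          rw [h1]
          have h2 : G.w u * G.w v / (totW G)^2 * |G.b u v| 
              = G.w u * G.w v * |G.b u v| / (totW G)^2 := by ring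
          rw [h2]
          refine mul_le_mul_of_nonneg_left (abs_le_Jbnd J _ _) ?_
          have := G.wnn u; have := G.wnn v
          positivity
      _ = norm1 G * Jbnd J := by
          rw [norm1, Finset.sum_mul]
          exact Finset.sum_congr rfl fun u _ => by rw [Finset.sum_mul]
  rw [energy, abs_mul, abs_neg, abs_of_nonneg (by
    have := norm1_nonneg G
    positivity : (0:ℝ) ≤ 1 / norm1 G)]
  rcases eq_or_lt_of_le (norm1_nonneg G) with h | h
  · rw [← h]
    simp [Jbnd_nonneg J]
  · calc 1 / norm1 G * |∑ u, ∑ v, (G.w u * G.w v / (totW G)^2) * G.b u v * J (φ v) (φ u)|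
        ≤ 1 / norm1 G * (norm1 G * Jbnd J) :=
          mul_le_mul_of_nonneg_left hS (by positivity)
      _ = Jbnd J := by field_simp

lemma microE_abs_le {q : ℕ} (G : WGraph) (J : Matrix (Fin q) (Fin q) ℝ)
    (a : Fin q → ℝ) (ε : ℝ) : |microE G J a ε| ≤ Jbnd J := by
  rw [microE]
  by_cases h : ∃ φ : Fin G.n → Fin q, inOmega G a ε φ
  · obtain ⟨φ0, h0⟩ := h
    have hbdd : BddBelow {e : ℝ | ∃ φ : Fin G.n → Fin q, inOmega G a ε φ ∧ e = energy G J φ} := by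
      refine ⟨-Jbnd J, ?_⟩
      rintro e ⟨φ, -, rfl⟩
      exact neg_le_of_abs_le (energy_abs_le G J φ)
    rw [abs_le]
    constructor
    · refine le_csInf ⟨_, φ0, h0, rfl⟩ ?_
      rintro e ⟨φ, -, rfl⟩
      exact neg_le_of_abs_le (energy_abs_le G J φ)
    · exact (csInf_le hbdd ⟨φ0, h0, rfl⟩).trans (le_of_abs_le (energy_abs_le G J φ0))
  · have hS : {e : ℝ | ∃ φ : Fin G.n → Fin q, inOmega G a ε φ ∧ e = energy G J φ} = ∅ := by
      ext e; simp only [Set.mem_setOf_eq, Set.mem_empty_iff_false, iff_false]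
      rintro ⟨φ, hφ, -⟩; exact h ⟨φ, hφ⟩
    rw [hS, Real.sInf_empty, abs_zero]
    exact Jbnd_nonneg J

lemma energy_smul {q : ℕ} (G : WGraph) (J : Matrix (Fin q) (Fin q) ℝ) (c : ℝ)
    (φ : Fin G.n → Fin q) : energy G (c • J) φ = c * energy G J φ := by
  have h : (∑ u, ∑ v, (G.w u * G.w v / (totW G)^2) * G.b u v * ((c • J) (φ v) (φ u)))
      = c * ∑ u, ∑ v, (G.w u * G.w v / (totW G)^2) * G.b u v * J (φ v) (φ u) := by
    rw [Finset.mul_sum]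
    refine Finset.sum_congr rfl fun u _ => ?_
    rw [Finset.mul_sum]
    refine Finset.sum_congr rfl fun v _ => ?_
    simp only [Matrix.smul_apply, smul_eq_mul]
    ring
  rw [energy, energy, h]
  ring

lemma microE_smul {q : ℕ} (G : WGraph) (J : Matrix (Fin q) (Fin q) ℝ)
    (a : Fin q → ℝ) (ε : ℝ) {c : ℝ} (hc : 0 ≤ c) :
    microE G (c • J) a ε = c * microE G J a ε := by
  rw [microE, microE, ← smul_eq_mul, ← Real.sInf_smul_of_nonneg hc]
  congr 1
  ext e
  simp only [Set.mem_setOf_eq, Set.mem_smul_set, smul_eq_mul]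
  constructor
  · rintro ⟨φ, hφ, rfl⟩
    exact ⟨energy G J φ, ⟨φ, hφ, rfl⟩, (energy_smul G J c φ).symm⟩
  · rintro ⟨y, ⟨φ, hφ, rfl⟩, rfl⟩
    exact ⟨φ, hφ, (energy_smul G J c φ).symm⟩
lemma div_helper1 {n x y : ℝ} (hn : 0 < n) (h : -(n * x) ≤ y) : -(1 / n) * y ≤ x := by
  have h2 := mul_le_mul_of_nonneg_left h (le_of_lt (by positivity : (0:ℝ) < 1 / n))
  have h3 : 1 / n * (n * x) = x := by field_simp
  rw [mul_neg, h3] at h2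
  linarith

lemma div_helper2 {n x y c : ℝ} (hn : 0 < n) (h : y ≤ n * c - n * x) : x ≤ -(1 / n) * y + c := by
  have h2 := mul_le_mul_of_nonneg_left h (le_of_lt (by positivity : (0:ℝ) < 1 / n))
  have h3 : 1 / n * (n * c - n * x) = c - x := by field_simp
  rw [h3] at h2
  linarith

lemma sandwich {q : ℕ} (G : WGraph) (J : Matrix (Fin q) (Fin q) ℝ) (a : Fin q → ℝ) (ε : ℝ)
    (hq : 1 ≤ q) (hn : 1 ≤ G.n) :
    microF G J a ε ≤ microE G J a ε ∧ microE G J a ε ≤ microF G J a ε + Real.log q := by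
  have hlogq : 0 ≤ Real.log q := Real.log_nonneg (by exact_mod_cast hq)
  by_cases h : ∃ φ : Fin G.n → Fin q, inOmega G a ε φ
  · obtain ⟨φ0, h0⟩ := h
    have hn0 : (0:ℝ) < (G.n : ℝ) := by exact_mod_cast hn
    set S := {e : ℝ | ∃ φ : Fin G.n → Fin q, inOmega G a ε φ ∧ e = energy G J φ} with hSdef
    have hSne : S.Nonempty := ⟨_, φ0, h0, rfl⟩
    have hbdd : BddBelow S := by
      refine ⟨-Jbnd J, ?_⟩
      rintro e ⟨φ, -, rfl⟩
      exact neg_le_of_abs_le (energy_abs_le G J φ)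
    have hZge : ∀ φ : Fin G.n → Fin q, inOmega G a ε φ →
        Real.exp (-(G.n : ℝ) * energy G J φ) ≤ microZ G J a ε := by
      intro φ hφ
      rw [microZ]
      have hnn : ∀ ψ : Fin G.n → Fin q, ψ ∈ Finset.univ →
          0 ≤ Set.indicator {φ : Fin G.n → Fin q | inOmega G a ε φ}
            (fun φ => Real.exp (-(G.n : ℝ) * energy G J φ)) ψ :=
        fun ψ _ => Set.indicator_nonneg (fun _ _ => (Real.exp_pos _).le) ψ
      have := Finset.single_le_sum hnn (Finset.mem_univ φ)
      rwa [Set.indicator_of_mem (show φ ∈ {φ : Fin G.n → Fin q | inOmega G a ε φ} from hφ)] at this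
    have hZpos : 0 < microZ G J a ε := lt_of_lt_of_le (Real.exp_pos _) (hZge φ0 h0)
    constructor
    · -- lower bound: F ≤ sInf S
      refine le_csInf hSne ?_
      rintro e ⟨φ, hφ, rfl⟩
      rw [microF]
      refine div_helper1 hn0 ?_
      have := Real.log_le_log (Real.exp_pos _) (hZge φ hφ)
      rwa [Real.log_exp, neg_mul] at this
    · -- upper bound
      have hcard : (Fintype.card (Fin G.n → Fin q) : ℝ) = (q : ℝ) ^ G.n := by
        rw [Fintype.card_fun]; push_cast; simp
      have hZle : microZ G J a ε ≤ (q : ℝ) ^ G.n * Real.exp (-(G.n : ℝ) * sInf S) := by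
        rw [microZ]
        calc (∑ φ : Fin G.n → Fin q,
              Set.indicator {φ : Fin G.n → Fin q | inOmega G a ε φ}
                (fun φ => Real.exp (-(G.n : ℝ) * energy G J φ)) φ)
            ≤ ∑ _φ : Fin G.n → Fin q, Real.exp (-(G.n : ℝ) * sInf S) := by
              refine Finset.sum_le_sum fun φ _ => ?_
              by_cases hφ : φ ∈ {φ : Fin G.n → Fin q | inOmega G a ε φ}
              · rw [Set.indicator_of_mem hφ]
                refine Real.exp_le_exp.mpr ?_
                have hle : sInf S ≤ energy G J φ := csInf_le hbdd ⟨φ, hφ, rfl⟩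
                nlinarith
              · rw [Set.indicator_of_notMem hφ]
                exact (Real.exp_pos _).le
          _ = (q : ℝ) ^ G.n * Real.exp (-(G.n : ℝ) * sInf S) := by
              rw [Finset.sum_const, Finset.card_univ, nsmul_eq_mul, hcard]
      have hq0 : (0:ℝ) < (q : ℝ) ^ G.n := by
        have : (0:ℝ) < (q:ℝ) := by exact_mod_cast hq
        positivity
      have hlog := Real.log_le_log hZpos hZle
      rw [Real.log_mul hq0.ne' (Real.exp_pos _).ne', Real.log_exp, Real.log_pow] at hlog
      show sInf S ≤ microF G J a ε + Real.log q
      rw [microF]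
      refine div_helper2 hn0 ?_
      nlinarith
  · have hZ : microZ G J a ε = 0 := Finset.sum_eq_zero fun φ _ =>
      Set.indicator_of_notMem (fun hφ => h ⟨φ, hφ⟩) _
    have hS : {e : ℝ | ∃ φ : Fin G.n → Fin q, inOmega G a ε φ ∧ e = energy G J φ} = ∅ := by
      ext e; simp only [Set.mem_setOf_eq, Set.mem_empty_iff_false, iff_false]
      rintro ⟨φ, hφ, -⟩; exact h ⟨φ, hφ⟩
    rw [microF, microE, hZ, hS, Real.log_zero, Real.sInf_empty, mul_zero]
    simpa using hlogq
section LimHelpers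

variable {α : Type*} {f : Filter α} {u : α → ℝ} {c C : ℝ}

lemma bddU_le (hb : ∀ᶠ x in f, |u x| ≤ C) : f.IsBoundedUnder (· ≤ ·) u :=
  ⟨C, by rw [eventually_map]; exact hb.mono fun x hx => le_of_abs_le hx⟩

lemma bddU_ge (hb : ∀ᶠ x in f, |u x| ≤ C) : f.IsBoundedUnder (· ≥ ·) u :=
  ⟨-C, by rw [eventually_map]; exact hb.mono fun x hx => neg_le_of_abs_le hx⟩

lemma liminf_cmul [f.NeBot] (hc : 0 < c) (hb : ∀ᶠ x in f, |u x| ≤ C) :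
    liminf (fun x => c * u x) f = c * liminf u f := by
  have hb' : ∀ᶠ x in f, |c * u x| ≤ c * C := hb.mono fun x hx => by
    rw [abs_mul, abs_of_pos hc]
    exact mul_le_mul_of_nonneg_left hx hc.le
  exact ((OrderIso.mulLeft₀ c hc).liminf_apply (bddU_ge hb)
    ((bddU_le hb).isCoboundedUnder_ge) (bddU_ge hb') ((bddU_le hb').isCoboundedUnder_ge)).symm

lemma limsup_cmul [f.NeBot] (hc : 0 < c) (hb : ∀ᶠ x in f, |u x| ≤ C) :
    limsup (fun x => c * u x) f = c * limsup u f := by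
  have hb' : ∀ᶠ x in f, |c * u x| ≤ c * C := hb.mono fun x hx => by
    rw [abs_mul, abs_of_pos hc]
    exact mul_le_mul_of_nonneg_left hx hc.le
  exact ((OrderIso.mulLeft₀ c hc).limsup_apply (bddU_le hb)
    ((bddU_ge hb).isCoboundedUnder_le) (bddU_le hb') ((bddU_ge hb').isCoboundedUnder_le)).symm

end LimHelpers
/-- If `|V(G_n)| → ∞` and the microcanonical free energies converge (for a fixed `q`, `a`
and all symmetric `J`), then the microcanonical ground state energies converge, with
`E_a(J) = lim_{λ→∞} F_a(λJ)/λ`. -/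
theorem stmt17 (G : ℕ → WGraph) (hn : Tendsto (fun k => (G k).n) atTop atTop)
    (q : ℕ) (a : Fin q → ℝ) (hann : ∀ i, 0 ≤ a i) (hasum : ∑ i, a i = 1)
    (FA : Matrix (Fin q) (Fin q) ℝ → ℝ)
    (hF : ∀ J : Matrix (Fin q) (Fin q) ℝ, J.IsSymm →
      Tendsto (fun ε => liminf (fun k => microF (G k) J a ε) atTop)
        (nhdsWithin 0 (Set.Ioi 0)) (nhds (FA J)) ∧
      Tendsto (fun ε => limsup (fun k => microF (G k) J a ε) atTop)
        (nhdsWithin 0 (Set.Ioi 0)) (nhds (FA J))) :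
    ∀ J : Matrix (Fin q) (Fin q) ℝ, J.IsSymm →
      ∃ EA : ℝ,
        Tendsto (fun ε => liminf (fun k => microE (G k) J a ε) atTop)
          (nhdsWithin 0 (Set.Ioi 0)) (nhds EA) ∧
        Tendsto (fun ε => limsup (fun k => microE (G k) J a ε) atTop)
          (nhdsWithin 0 (Set.Ioi 0)) (nhds EA) ∧
        Tendsto (fun lam : ℝ => FA (lam • J) / lam) atTop (nhds EA) := by
  intro J hJ
  have hq : 1 ≤ q := by
    rcases Nat.eq_zero_or_pos q with h | h
    · subst h; simp at hasum
    · exact h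
  have hlogq : 0 ≤ Real.log q := Real.log_nonneg (by exact_mod_cast hq)
  have hM0 : 0 ≤ Jbnd J := Jbnd_nonneg J
  set M : ℝ := Jbnd J with hMdef
  set l : Filter ℝ := nhdsWithin 0 (Set.Ioi 0) with hldef
  haveI : l.NeBot := nhdsGT_neBot 0
  have hEb : ∀ ε : ℝ, ∀ᶠ k in atTop, |microE (G k) J a ε| ≤ M :=
    fun ε => Eventually.of_forall fun k => microE_abs_le (G k) J a ε
  have hLb : ∀ᶠ ε in l, |liminf (fun k => microE (G k) J a ε) atTop| ≤ M := by
    refine Eventually.of_forall fun ε => abs_le.mpr ⟨?_, ?_⟩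
    · exact le_liminf_of_le ((bddU_le (hEb ε)).isCoboundedUnder_ge)
        ((hEb ε).mono fun k hk => neg_le_of_abs_le hk)
    · exact (liminf_le_limsup (bddU_le (hEb ε)) (bddU_ge (hEb ε))).trans
        (limsup_le_of_le ((bddU_ge (hEb ε)).isCoboundedUnder_le)
          ((hEb ε).mono fun k hk => le_of_abs_le hk))
  have hUb : ∀ᶠ ε in l, |limsup (fun k => microE (G k) J a ε) atTop| ≤ M := by
    refine Eventually.of_forall fun ε => abs_le.mpr ⟨?_, ?_⟩
    · refine le_trans ?_ (liminf_le_limsup (bddU_le (hEb ε)) (bddU_ge (hEb ε)))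
      exact le_liminf_of_le ((bddU_le (hEb ε)).isCoboundedUnder_ge)
        ((hEb ε).mono fun k hk => neg_le_of_abs_le hk)
    · exact limsup_le_of_le ((bddU_ge (hEb ε)).isCoboundedUnder_le)
        ((hEb ε).mono fun k hk => le_of_abs_le hk)
  have hev : ∀ᶠ k in atTop, 1 ≤ (G k).n := hn.eventually_ge_atTop 1
  -- Stage 1: per-ε comparison between liminf/limsup of F and of λ·E along atTop
  have stage1 : ∀ lam : ℝ, 0 < lam → ∀ ε : ℝ,
      (liminf (fun k => microF (G k) (lam • J) a ε) atTop
          ≤ lam * liminf (fun k => microE (G k) J a ε) atTop ∧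
        lam * liminf (fun k => microE (G k) J a ε) atTop
          ≤ liminf (fun k => microF (G k) (lam • J) a ε) atTop + Real.log q) ∧
      (limsup (fun k => microF (G k) (lam • J) a ε) atTop
          ≤ lam * limsup (fun k => microE (G k) J a ε) atTop ∧
        lam * limsup (fun k => microE (G k) J a ε) atTop
          ≤ limsup (fun k => microF (G k) (lam • J) a ε) atTop + Real.log q) := by
    intro lam hlam ε
    have hsand : ∀ᶠ k in atTop,
        microF (G k) (lam • J) a ε ≤ lam * microE (G k) J a ε ∧
        lam * microE (G k) J a ε ≤ microF (G k) (lam • J) a ε + Real.log q := by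
      filter_upwards [hev] with k hk
      have h := sandwich (G k) (lam • J) a ε hq hk
      rwa [microE_smul (G k) J a ε hlam.le] at h
    have hElam : ∀ᶠ k in atTop, |lam * microE (G k) J a ε| ≤ lam * M := by
      filter_upwards [hEb ε] with k hk
      rw [abs_mul, abs_of_pos hlam]
      exact mul_le_mul_of_nonneg_left hk hlam.le
    have hFb : ∀ᶠ k in atTop, |microF (G k) (lam • J) a ε| ≤ lam * M + Real.log q := by
      filter_upwards [hsand, hElam] with k h1 h2
      have h3 := abs_le.mp h2
      exact abs_le.mpr ⟨by linarith [h1.2], by linarith [h1.1]⟩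
    have hFq : ∀ᶠ k in atTop,
        |microF (G k) (lam • J) a ε + Real.log q| ≤ lam * M + 2 * Real.log q := by
      filter_upwards [hFb] with k hk
      have := abs_le.mp hk
      exact abs_le.mpr ⟨by linarith, by linarith⟩
    have hcmulL := liminf_cmul (f := atTop) hlam (hEb ε)
    have hcmulU := limsup_cmul (f := atTop) hlam (hEb ε)
    refine ⟨⟨?_, ?_⟩, ?_, ?_⟩
    · rw [← hcmulL]
      exact liminf_le_liminf (hsand.mono fun k h => h.1) (bddU_ge hFb)
        ((bddU_le hElam).isCoboundedUnder_ge)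
    · rw [← hcmulL, ← liminf_add_const atTop (fun k => microF (G k) (lam • J) a ε)
        (Real.log q) ((bddU_le hFb).isCoboundedUnder_ge) (bddU_ge hFb)]
      exact liminf_le_liminf (hsand.mono fun k h => h.2) (bddU_ge hElam)
        ((bddU_le hFq).isCoboundedUnder_ge)
    · rw [← hcmulU]
      exact limsup_le_limsup (hsand.mono fun k h => h.1)
        ((bddU_ge hFb).isCoboundedUnder_le) (bddU_le hElam)
    · rw [← hcmulU, ← limsup_add_const atTop (fun k => microF (G k) (lam • J) a ε)
        (Real.log q) (bddU_le hFb) ((bddU_ge hFb).isCoboundedUnder_le)]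
      exact limsup_le_limsup (hsand.mono fun k h => h.2)
        ((bddU_ge hElam).isCoboundedUnder_le) (bddU_le hFq)
  -- Key: ε → 0 stage
  have key : ∀ (X Flim : ℝ → ℝ) (lam : ℝ), 0 < lam →
      (∀ᶠ ε in l, |X ε| ≤ M) →
      Tendsto Flim l (nhds (FA (lam • J))) →
      (∀ ε : ℝ, Flim ε ≤ lam * X ε ∧ lam * X ε ≤ Flim ε + Real.log q) →
      FA (lam • J) / lam ≤ liminf X l ∧ liminf X l ≤ limsup X l ∧
        limsup X l ≤ FA (lam • J) / lam + Real.log q / lam := by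
    intro X Flim lam hlam hXb hT hc
    have hXlamb : ∀ᶠ ε in l, |lam * X ε| ≤ lam * M := hXb.mono fun ε hε => by
      rw [abs_mul, abs_of_pos hlam]
      exact mul_le_mul_of_nonneg_left hε hlam.le
    refine ⟨?_, liminf_le_limsup (bddU_le hXb) (bddU_ge hXb), ?_⟩
    · rw [div_le_iff₀ hlam, mul_comm, ← liminf_cmul hlam hXb]
      calc FA (lam • J) = liminf Flim l := hT.liminf_eq.symm
        _ ≤ liminf (fun ε => lam * X ε) l :=
          liminf_le_liminf (Eventually.of_forall fun ε => (hc ε).1)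
            hT.isBoundedUnder_ge ((bddU_le hXlamb).isCoboundedUnder_ge)
    · rw [← add_div, le_div_iff₀ hlam, mul_comm, ← limsup_cmul hlam hXb]
      have hT2 : Tendsto (fun ε => Flim ε + Real.log q) l
          (nhds (FA (lam • J) + Real.log q)) := hT.add tendsto_const_nhds
      calc limsup (fun ε => lam * X ε) l ≤ limsup (fun ε => Flim ε + Real.log q) l :=
            limsup_le_limsup (Eventually.of_forall fun ε => (hc ε).2)
              ((bddU_ge hXlamb).isCoboundedUnder_le) hT2.isBoundedUnder_le
        _ = FA (lam • J) + Real.log q := hT2.limsup_eq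
  have hkeyL : ∀ lam : ℝ, 0 < lam →
      FA (lam • J) / lam ≤ liminf (fun ε => liminf (fun k => microE (G k) J a ε) atTop) l ∧
      liminf (fun ε => liminf (fun k => microE (G k) J a ε) atTop) l
        ≤ limsup (fun ε => liminf (fun k => microE (G k) J a ε) atTop) l ∧
      limsup (fun ε => liminf (fun k => microE (G k) J a ε) atTop) l
        ≤ FA (lam • J) / lam + Real.log q / lam :=
    fun lam hlam => key _ _ lam hlam hLb (hF (lam • J) (hJ.smul lam)).1
      (fun ε => (stage1 lam hlam ε).1)
  have hkeyU : ∀ lam : ℝ, 0 < lam →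
      FA (lam • J) / lam ≤ liminf (fun ε => limsup (fun k => microE (G k) J a ε) atTop) l ∧
      liminf (fun ε => limsup (fun k => microE (G k) J a ε) atTop) l
        ≤ limsup (fun ε => limsup (fun k => microE (G k) J a ε) atTop) l ∧
      limsup (fun ε => limsup (fun k => microE (G k) J a ε) atTop) l
        ≤ FA (lam • J) / lam + Real.log q / lam :=
    fun lam hlam => key _ _ lam hlam hUb (hF (lam • J) (hJ.smul lam)).2
      (fun ε => (stage1 lam hlam ε).2)
  -- All four quantities lie in [FA(λJ)/λ, FA(λJ)/λ + log q/λ]; hence they are all equal.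
  have ht0 : Tendsto (fun lam : ℝ => Real.log q / lam) atTop (nhds 0) :=
    tendsto_const_nhds.div_atTop tendsto_id
  have hiv : ∀ x y : ℝ,
      (∀ lam : ℝ, 0 < lam →
        FA (lam • J) / lam ≤ x ∧ x ≤ FA (lam • J) / lam + Real.log q / lam) →
      (∀ lam : ℝ, 0 < lam →
        FA (lam • J) / lam ≤ y ∧ y ≤ FA (lam • J) / lam + Real.log q / lam) →
      x = y := by
    intro x y hx hy
    have habs : ∀ᶠ lam in (atTop : Filter ℝ), |x - y| ≤ Real.log q / lam := by
      filter_upwards [eventually_gt_atTop (0:ℝ)] with lam hlam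
      obtain ⟨hx1, hx2⟩ := hx lam hlam
      obtain ⟨hy1, hy2⟩ := hy lam hlam
      rw [abs_sub_le_iff]
      constructor <;> linarith
    have h0 := ge_of_tendsto ht0 habs
    have h1 : |x - y| = 0 := le_antisymm h0 (abs_nonneg _)
    exact sub_eq_zero.mp (abs_eq_zero.mp h1)
  have hILinf : ∀ lam : ℝ, 0 < lam →
      FA (lam • J) / lam ≤ liminf (fun ε => liminf (fun k => microE (G k) J a ε) atTop) l ∧
      liminf (fun ε => liminf (fun k => microE (G k) J a ε) atTop) l
        ≤ FA (lam • J) / lam + Real.log q / lam :=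
    fun lam hlam => ⟨(hkeyL lam hlam).1, (hkeyL lam hlam).2.1.trans (hkeyL lam hlam).2.2⟩
  have hILsup : ∀ lam : ℝ, 0 < lam →
      FA (lam • J) / lam ≤ limsup (fun ε => liminf (fun k => microE (G k) J a ε) atTop) l ∧
      limsup (fun ε => liminf (fun k => microE (G k) J a ε) atTop) l
        ≤ FA (lam • J) / lam + Real.log q / lam :=
    fun lam hlam => ⟨(hkeyL lam hlam).1.trans (hkeyL lam hlam).2.1, (hkeyL lam hlam).2.2⟩
  have hIUinf : ∀ lam : ℝ, 0 < lam →
      FA (lam • J) / lam ≤ liminf (fun ε => limsup (fun k => microE (G k) J a ε) atTop) l ∧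
      liminf (fun ε => limsup (fun k => microE (G k) J a ε) atTop) l
        ≤ FA (lam • J) / lam + Real.log q / lam :=
    fun lam hlam => ⟨(hkeyU lam hlam).1, (hkeyU lam hlam).2.1.trans (hkeyU lam hlam).2.2⟩
  have hIUsup : ∀ lam : ℝ, 0 < lam →
      FA (lam • J) / lam ≤ limsup (fun ε => limsup (fun k => microE (G k) J a ε) atTop) l ∧
      limsup (fun ε => limsup (fun k => microE (G k) J a ε) atTop) l
        ≤ FA (lam • J) / lam + Real.log q / lam :=
    fun lam hlam => ⟨(hkeyU lam hlam).1.trans (hkeyU lam hlam).2.1, (hkeyU lam hlam).2.2⟩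
  refine ⟨liminf (fun ε => liminf (fun k => microE (G k) J a ε) atTop) l, ?_, ?_, ?_⟩
  · exact tendsto_of_liminf_eq_limsup rfl (hiv _ _ hILsup hILinf)
      (bddU_le hLb) (bddU_ge hLb)
  · exact tendsto_of_liminf_eq_limsup (hiv _ _ hIUinf hILinf) (hiv _ _ hIUsup hILinf)
      (bddU_le hUb) (bddU_ge hUb)
  · have hlow : Tendsto (fun lam : ℝ =>
        liminf (fun ε => liminf (fun k => microE (G k) J a ε) atTop) l - Real.log q / lam)
        atTop (nhds (liminf (fun ε => liminf (fun k => microE (G k) J a ε) atTop) l)) := by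
      simpa using tendsto_const_nhds.sub ht0
    refine tendsto_of_tendsto_of_tendsto_of_le_of_le' hlow tendsto_const_nhds ?_ ?_
    · filter_upwards [eventually_gt_atTop (0:ℝ)] with lam hlam
      have := (hILinf lam hlam).2
      linarith
    · filter_upwards [eventually_gt_atTop (0:ℝ)] with lam hlam
      exact (hILinf lam hlam).1
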